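/- Let {(σ_n, v_n, u_n)}_{n∈ℕ} be a singular system for the compact linear operator K : X → Y. For every x in the closed linear span of {v_n : n ∈ ℕ}, the ℓ^{1/2}-SVD reconstruction of the exact data K x converges to x as the regularization parameter tends to zero: ‖ ∑_n H_{α,σ_n}(σ_n^{1/3} ⟨K x, u_n⟩) v_n − x ‖ → 0 as α → 0⁺ (note that σ_n^{1/3} ⟨K x, u_n⟩ = σ_n^{4/3} ⟨x, v_n⟩). -/

import Mathlib

open scoped InnerProductSpace Topology
open Filter

/-- The half thresholding function `H_{α,σ}`. -/
noncomputable def halfThresh (α σ t : ℝ) : ℝ :=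
  if |t| ≤ 3 / 4 * α ^ ((2 : ℝ) / 3) then 0
  else 2 / (3 * σ ^ ((4 : ℝ) / 3)) * t *
    (1 + Real.cos (2 / 3 * Real.pi -
      2 / 3 * Real.arccos (α / 8 * (|t| / 3) ^ (-(3 : ℝ) / 2))))

lemma halfThresh_bound {σ : ℝ} (hσ : 0 < σ) (α c : ℝ) :
    |halfThresh α σ (σ ^ ((4:ℝ)/3) * c) - c| ≤ |c| := by
  have hs : (0:ℝ) < σ ^ ((4:ℝ)/3) := Real.rpow_pos_of_pos hσ _
  unfold halfThresh
  split_ifs with h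
  · simp
  · set q := Real.cos (2 / 3 * Real.pi -
      2 / 3 * Real.arccos (α / 8 * (|σ ^ ((4:ℝ)/3) * c| / 3) ^ (-(3 : ℝ) / 2))) with hq
    have hq1 : -1 ≤ q := Real.neg_one_le_cos _
    have hq2 : q ≤ 1 := Real.cos_le_one _
    have he : 2 / (3 * σ ^ ((4:ℝ)/3)) * (σ ^ ((4:ℝ)/3) * c) * (1 + q) - c
        = c * (2 * q - 1) / 3 := by field_simp; ring
    rw [he, abs_div, abs_mul]
    have : |2 * q - 1| ≤ 3 := by rw [abs_le]; constructor <;> linarith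
    calc |c| * |2 * q - 1| / |(3:ℝ)| ≤ |c| * 3 / 3 := by
          rw [show |(3:ℝ)| = 3 by norm_num]
          gcongr
      _ = |c| := by ring

lemma halfThresh_tendsto {σ : ℝ} (hσ : 0 < σ) (c : ℝ) :
    Tendsto (fun α => halfThresh α σ (σ ^ ((4:ℝ)/3) * c)) (𝓝[>] 0) (𝓝 c) := by
  have hs : (0:ℝ) < σ ^ ((4:ℝ)/3) := Real.rpow_pos_of_pos hσ _
  rcases eq_or_ne c 0 with rfl | hc
  · apply Tendsto.congr' _ tendsto_const_nhds
    filter_upwards [self_mem_nhdsWithin] with α (hα : (0:ℝ) < α)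
    have : |σ ^ ((4:ℝ)/3) * (0:ℝ)| ≤ 3 / 4 * α ^ ((2:ℝ)/3) := by
      simp [Real.rpow_nonneg hα.le]
    simp [halfThresh, this]
  · set t : ℝ := σ ^ ((4:ℝ)/3) * c with htdef
    have ht : t ≠ 0 := mul_ne_zero hs.ne' hc
    have htpos : 0 < |t| := abs_pos.mpr ht
    set g : ℝ → ℝ := fun α => 2 / (3 * σ ^ ((4:ℝ)/3)) * t *
      (1 + Real.cos (2 / 3 * Real.pi -
        2 / 3 * Real.arccos (α / 8 * (|t| / 3) ^ (-(3 : ℝ) / 2)))) with hg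
    have hgc : Continuous g := by
      apply Continuous.mul continuous_const
      apply Continuous.add continuous_const
      apply Real.continuous_cos.comp
      apply Continuous.sub continuous_const
      exact continuous_const.mul (Real.continuous_arccos.comp (by continuity))
    have hg0 : g 0 = c := by
      have : (0:ℝ) / 8 * (|t| / 3) ^ (-(3 : ℝ) / 2) = 0 := by ring
      rw [hg]
      simp only [this, Real.arccos_zero]
      rw [show 2 / 3 * Real.pi - 2 / 3 * (Real.pi / 2) = Real.pi / 3 by ring,
        Real.cos_pi_div_three]
      rw [htdef]; field_simp; ring
    have hlim : Tendsto g (𝓝[>] 0) (𝓝 c) := by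
      rw [← hg0]
      exact (hgc.tendsto 0).mono_left nhdsWithin_le_nhds
    apply Tendsto.congr' _ hlim
    have hδ : (0:ℝ) < (4 / 3 * |t|) ^ ((3:ℝ)/2) := Real.rpow_pos_of_pos (by positivity) _
    filter_upwards [Ioo_mem_nhdsGT_of_mem (Set.mem_Ico.mpr ⟨le_refl 0, hδ⟩)] with α hα
    obtain ⟨hα0, hαδ⟩ := hα
    have hlt : 3 / 4 * α ^ ((2:ℝ)/3) < |t| := by
      have h1 : α ^ ((2:ℝ)/3) < ((4 / 3 * |t|) ^ ((3:ℝ)/2)) ^ ((2:ℝ)/3) :=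
        Real.rpow_lt_rpow hα0.le hαδ (by norm_num)
      have h2 : ((4 / 3 * |t|) ^ ((3:ℝ)/2)) ^ ((2:ℝ)/3) = 4 / 3 * |t| := by
        rw [← Real.rpow_mul (by positivity)]
        norm_num
      rw [h2] at h1; linarith
    rw [halfThresh, if_neg (not_le.mpr hlt)]

/-- For every `x` in the closed linear span of the right singular vectors `v n`, the
`ℓ^{1/2}`-SVD reconstruction of the exact data `K x` converges to `x` as `α → 0⁺`. -/
theorem halfSVD_convergence {X Y : Type*}
    [NormedAddCommGroup X] [InnerProductSpace ℝ X] [CompleteSpace X]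
    [NormedAddCommGroup Y] [InnerProductSpace ℝ Y] [CompleteSpace Y]
    (K : X →L[ℝ] Y) (hK : IsCompactOperator K)
    (σ : ℕ → ℝ) (v : ℕ → X) (u : ℕ → Y)
    (hσ : ∀ n, 0 < σ n) (hv : Orthonormal ℝ v) (hu : Orthonormal ℝ u)
    (hKv : ∀ n, K (v n) = σ n • u n)
    (hKadj : ∀ n, (ContinuousLinearMap.adjoint K) (u n) = σ n • v n)
    (x : X) (hx : x ∈ (Submodule.span ℝ (Set.range v)).topologicalClosure) :
    Filter.Tendsto
      (fun α : ℝ =>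
        ‖(∑' n, halfThresh α (σ n) (σ n ^ ((1 : ℝ) / 3) * ⟪K x, u n⟫_ℝ) • v n) - x‖)
      (𝓝[>] 0) (𝓝 0) := by
  set c : ℕ → ℝ := fun n => ⟪x, v n⟫_ℝ with hc
  -- rewrite the coefficient argument
  have hcoef : ∀ n, σ n ^ ((1:ℝ)/3) * ⟪K x, u n⟫_ℝ = σ n ^ ((4:ℝ)/3) * c n := by
    intro n
    have h1 : ⟪K x, u n⟫_ℝ = σ n * c n := by
      rw [← ContinuousLinearMap.adjoint_inner_right, hKadj n, real_inner_smul_right]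
    rw [h1, ← mul_assoc]
    congr 1
    nth_rewrite 2 [← Real.rpow_one (σ n)]
    rw [← Real.rpow_add (hσ n)]
    norm_num
  -- the closed span and its Hilbert basis
  set S := (Submodule.span ℝ (Set.range v)).topologicalClosure with hS
  haveI : CompleteSpace S :=
    (Submodule.isClosed_topologicalClosure _).completeSpace_coe
  set w : ℕ → S := fun n =>
    ⟨v n, Submodule.le_topologicalClosure _ (Submodule.subset_span ⟨n, rfl⟩)⟩ with hwdef
  have hw : Orthonormal ℝ w := by
    rw [orthonormal_iff_ite] at hv ⊢
    intro i j
    exact hv i j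
  have hdense : ⊤ ≤ (Submodule.span ℝ (Set.range w)).topologicalClosure := by
    intro y _
    have himg : Submodule.map S.subtype (Submodule.span ℝ (Set.range w))
        = Submodule.span ℝ (Set.range v) := by
      rw [Submodule.map_span]
      congr 1
      rw [← Set.range_comp]
      rfl
    have h1 : (y : X) ∈ closure ((Submodule.span ℝ (Set.range v) : Set X)) := by
      have h0 := y.2
      rw [← Submodule.topologicalClosure_coe]
      exact h0
    have h2 : (y : X) ∈ closure (Subtype.val '' ((Submodule.span ℝ (Set.range w)) : Set S)) := by
      have : (Subtype.val '' ((Submodule.span ℝ (Set.range w)) : Set S))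
          = ((Submodule.span ℝ (Set.range v)) : Set X) := by
        rw [← himg]; rfl
      rw [this]; exact h1
    have hemb : Topology.IsEmbedding ((↑) : S → X) := Topology.IsEmbedding.subtypeVal
    rw [← SetLike.mem_coe, Submodule.topologicalClosure_coe,
      hemb.closure_eq_preimage_closure_image]
    exact h2
  set b : HilbertBasis ℕ ℝ S := HilbertBasis.mk hw hdense with hb
  set x' : S := ⟨x, hx⟩ with hx'
  -- x is the sum of its Fourier series
  have hbw : ∀ n, (b n : S) = w n := by
    intro n; rw [hb, HilbertBasis.coe_mk]
  have hxsum : HasSum (fun n => c n • v n) x := by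
    have h1 : HasSum (fun n => b.repr x' n • b n) x' := b.hasSum_repr x'
    have h2 : ∀ n, b.repr x' n • b n = c n • w n := by
      intro n
      rw [HilbertBasis.repr_apply_apply, hbw n]
      congr 1
      have : ⟪w n, x'⟫_ℝ = ⟪v n, x⟫_ℝ := rfl
      rw [this, real_inner_comm]
    rw [funext h2] at h1
    have h3 := h1.mapL S.subtypeL
    simpa using h3
  have hc2 : Summable (fun n => (c n) ^ 2) := by
    have := hv.inner_products_summable (x := x)
    apply this.congr
    intro n
    rw [Real.norm_eq_abs, sq_abs, real_inner_comm]
  -- the deviation sequence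
  set d : ℝ → ℕ → ℝ := fun α n =>
    halfThresh α (σ n) (σ n ^ ((4:ℝ)/3) * c n) - c n with hd
  have hdle : ∀ α n, (d α n) ^ 2 ≤ (c n) ^ 2 := by
    intro α n
    calc (d α n) ^ 2 = |d α n| ^ 2 := (sq_abs _).symm
      _ ≤ |c n| ^ 2 := pow_le_pow_left₀ (abs_nonneg _) (halfThresh_bound (hσ n) α (c n)) 2
      _ = (c n) ^ 2 := sq_abs _
  have hd2 : ∀ α, Summable (fun n => (d α n) ^ 2) :=
    fun α => Summable.of_nonneg_of_le (fun n => sq_nonneg _) (hdle α) hc2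
  -- norm identity
  have hkey : ∀ α : ℝ,
      ‖(∑' n, halfThresh α (σ n) (σ n ^ ((1 : ℝ) / 3) * ⟪K x, u n⟫_ℝ) • v n) - x‖
        = Real.sqrt (∑' n, (d α n) ^ 2) := by
    intro α
    have hmem : Memℓp (d α) 2 := by
      apply memℓp_gen
      have h2 : (2 : ENNReal).toReal = 2 := by simp
      rw [h2]
      apply (hd2 α).congr
      intro n
      rw [Real.norm_eq_abs, Real.rpow_two, sq_abs]
    set f : lp (fun _ : ℕ => ℝ) 2 := ⟨d α, hmem⟩ with hf
    set y : S := b.repr.symm f with hy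
    have h1 : HasSum (fun n => d α n • w n) y := by
      have := b.hasSum_repr_symm f
      apply this.congr_fun
      intro n
      rw [hbw n]
    have h2 : HasSum (fun n => d α n • v n) (y : X) := by simpa using h1.mapL S.subtypeL
    have h3 : HasSum
        (fun n => halfThresh α (σ n) (σ n ^ ((1 : ℝ) / 3) * ⟪K x, u n⟫_ℝ) • v n)
        ((y : X) + x) := by
      have := h2.add hxsum
      apply this.congr_fun
      intro n
      rw [hcoef n, ← add_smul, hd]
      ring_nf
    rw [h3.tsum_eq, add_sub_cancel_right]
    -- ‖y‖ = ‖f‖ and lp norm formula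
    have h4 : ‖(y : X)‖ = ‖f‖ := by
      rw [Submodule.norm_coe, hy, LinearIsometryEquiv.norm_map]
    rw [h4]
    have h5 : ‖f‖ ^ (2 : ℝ) = ∑' n, ‖d α n‖ ^ (2:ℝ) := by
      have := lp.norm_rpow_eq_tsum (p := 2) (by norm_num) f
      simpa using this
    have h6 : (∑' n, ‖d α n‖ ^ (2:ℝ)) = ∑' n, (d α n) ^ 2 := by
      congr 1
      funext n
      rw [Real.norm_eq_abs, Real.rpow_two, sq_abs]
    have h7 : ‖f‖ ^ (2 : ℝ) = ∑' n, (d α n) ^ 2 := by rw [h5, h6]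
    rw [← h7, Real.rpow_two, Real.sqrt_sq (norm_nonneg f)]
  -- dominated convergence
  have hDlim : Tendsto (fun α => ∑' n, (d α n) ^ 2) (𝓝[>] 0) (𝓝 0) := by
    have := tendsto_tsum_of_dominated_convergence (𝓕 := 𝓝[>] (0:ℝ))
      (f := fun α n => (d α n) ^ 2) (g := fun _ => (0:ℝ)) (bound := fun n => (c n) ^ 2)
      hc2 ?_ ?_
    · simpa using this
    · intro n
      have h1 : Tendsto (fun α => d α n) (𝓝[>] (0:ℝ)) (𝓝 0) := by
        have := (halfThresh_tendsto (hσ n) (c n)).sub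
          (tendsto_const_nhds : Tendsto (fun _ : ℝ => c n) (𝓝[>] (0:ℝ)) (𝓝 (c n)))
        simpa using this
      have := h1.pow 2
      simpa using this
    · apply Eventually.of_forall
      intro α n
      rw [Real.norm_eq_abs, abs_of_nonneg (sq_nonneg _)]
      exact hdle α n
  have : Tendsto (fun α => Real.sqrt (∑' n, (d α n) ^ 2)) (𝓝[>] 0) (𝓝 0) := by
    have := (Real.continuous_sqrt.tendsto 0).comp hDlim
    simpa [Function.comp_def] using this
  apply Tendsto.congr _ this
  intro α
  exact (hkey α).symm
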